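/- Let T be a densely defined closed operator from H1 to H2. Then T is minimum attaining if and only if T*T is minimum attaining, where T*T is the densely defined positive operator with domain D(T*T) = {x ∈ D(T) : Tx ∈ D(T*)} and (T*T)x = T*(Tx). -/

import Mathlib

set_option linter.unusedSectionVars false
set_option linter.unusedVariables false
set_option maxHeartbeats 1000000


open scoped InnerProductSpace

variable {H₁ H₂ H₃ : Type*} [NormedAddCommGroup H₁] [InnerProductSpace ℂ H₁] [CompleteSpace H₁]
  [NormedAddCommGroup H₂] [InnerProductSpace ℂ H₂] [CompleteSpace H₂]
  [NormedAddCommGroup H₃] [InnerProductSpace ℂ H₃] [CompleteSpace H₃]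

/-- Composition `S ∘ T` of partially defined operators, with the natural domain
`{x ∈ D(T) : Tx ∈ D(S)}` and value `x ↦ S (T x)`. -/
noncomputable def pmapComp (S : H₂ →ₗ.[ℂ] H₃) (T : H₁ →ₗ.[ℂ] H₂) : H₁ →ₗ.[ℂ] H₃ where
  domain := (S.domain.comap T.toFun).map T.domain.subtype
  toFun :=
    S.toFun ∘ₗ (T.toFun.restrict (q := S.domain) (fun _ hx => hx)) ∘ₗ
      (Submodule.equivMapOfInjective T.domain.subtype (Submodule.injective_subtype _)
        (S.domain.comap T.toFun)).symm.toLinearMap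

/-- The minimum modulus `m(T) = inf {‖Tx‖ : x ∈ D(T), ‖x‖ = 1}`. -/
noncomputable def minMod (T : H₁ →ₗ.[ℂ] H₂) : ℝ :=
  sInf {r : ℝ | ∃ x : T.domain, ‖(x : H₁)‖ = 1 ∧ r = ‖T x‖}

/-- `T` is minimum attaining: some unit vector of the domain attains `m(T)`. -/
def MinAttains (T : H₁ →ₗ.[ℂ] H₂) : Prop :=
  ∃ x : T.domain, ‖(x : H₁)‖ = 1 ∧ ‖T x‖ = minMod T

lemma mem_pmapComp {S : H₂ →ₗ.[ℂ] H₃} {T : H₁ →ₗ.[ℂ] H₂} {x : H₁} :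
    x ∈ (pmapComp S T).domain ↔ ∃ hx : x ∈ T.domain, T ⟨x, hx⟩ ∈ S.domain := by
  constructor
  · rintro ⟨y, hy, rfl⟩
    exact ⟨y.2, hy⟩
  · rintro ⟨hx, hTx⟩
    exact ⟨⟨x, hx⟩, hTx, rfl⟩

lemma pmapComp_apply {S : H₂ →ₗ.[ℂ] H₃} {T : H₁ →ₗ.[ℂ] H₂} (x : (pmapComp S T).domain)
    (h1 : (x : H₁) ∈ T.domain) (h2 : T ⟨x, h1⟩ ∈ S.domain) :
    pmapComp S T x = S ⟨T ⟨(x : H₁), h1⟩, h2⟩ := by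
  have hc : (⟨(x : H₁), h1⟩ : T.domain) ∈ S.domain.comap T.toFun := h2
  have he : (Submodule.equivMapOfInjective T.domain.subtype (Submodule.injective_subtype _)
        (S.domain.comap T.toFun)).symm x = ⟨⟨(x : H₁), h1⟩, hc⟩ := by
    apply (LinearEquiv.symm_apply_eq _).2
    apply Subtype.ext
    rfl
  show S.toFun ((T.toFun.restrict (q := S.domain) (fun _ hx => hx))
    ((Submodule.equivMapOfInjective T.domain.subtype (Submodule.injective_subtype _)
      (S.domain.comap T.toFun)).symm x)) = _
  rw [he]
  rfl

lemma minMod_le {T : H₁ →ₗ.[ℂ] H₂} (x : T.domain) (hx : ‖(x : H₁)‖ = 1) :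
    minMod T ≤ ‖T x‖ :=
  csInf_le ⟨0, by rintro r ⟨y, hy, rfl⟩; positivity⟩ ⟨x, hx, rfl⟩

lemma minMod_nonneg (T : H₁ →ₗ.[ℂ] H₂) : 0 ≤ minMod T :=
  Real.sInf_nonneg (by rintro r ⟨y, hy, rfl⟩; positivity)

lemma le_minMod {T : H₁ →ₗ.[ℂ] H₂} {c : ℝ} (x : T.domain) (hx : ‖(x : H₁)‖ = 1)
    (h : ∀ y : T.domain, ‖(y : H₁)‖ = 1 → c ≤ ‖T y‖) : c ≤ minMod T :=
  le_csInf ⟨‖T x‖, x, hx, rfl⟩ (by rintro r ⟨y, hy, rfl⟩; exact h y hy)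

/-- Scaling helper: a `‖·‖`-homogeneous function bounded below on unit vectors is bounded
below everywhere with the scaled bound. -/
lemma helper_scale {p : Submodule ℂ H₁} (f : p → ℝ) (m : ℝ)
    (hf : ∀ (c : ℂ) (z : p), f (c • z) = ‖c‖ * f z)
    (h : ∀ z : p, ‖(z : H₁)‖ = 1 → m ≤ f z) :
    ∀ z : p, m * ‖(z : H₁)‖ ≤ f z := by
  intro z
  rcases eq_or_ne (z : H₁) 0 with hz | hz
  · have hz' : z = 0 := Subtype.ext hz
    have : f 0 = 0 := by
      have := hf 0 0
      simpa using this
    simp [hz, hz', this]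
  · have hn : (0 : ℝ) < ‖(z : H₁)‖ := norm_pos_iff.2 hz
    set c : ℂ := ((‖(z : H₁)‖⁻¹ : ℝ) : ℂ)
    have hcz : ‖((c • z : p) : H₁)‖ = 1 := by
      have : ((c • z : p) : H₁) = c • (z : H₁) := rfl
      rw [this, norm_smul]
      simp [c, Complex.norm_real, abs_of_pos (inv_pos.2 hn), inv_mul_cancel₀ hn.ne']
    have := h (c • z) hcz
    rw [hf c z] at this
    have hcn : ‖c‖ = ‖(z : H₁)‖⁻¹ := by
      simp [c, Complex.norm_real, abs_of_pos (inv_pos.2 hn)]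
    rw [hcn] at this
    calc m * ‖(z : H₁)‖ ≤ (‖(z : H₁)‖⁻¹ * f z) * ‖(z : H₁)‖ := by
          exact mul_le_mul_of_nonneg_right this hn.le
      _ = f z := by field_simp
    
/-- If `a t² + 2 b t ≥ 0` for all real `t`, with `a ≥ 0`, then `b = 0`. -/
lemma quad_zero {a b : ℝ} (ha : 0 ≤ a) (h : ∀ t : ℝ, 0 ≤ a * t ^ 2 + 2 * b * t) : b = 0 := by
  by_contra hb
  have hb2 : 0 < b ^ 2 := by positivity
  have ha1 : (0 : ℝ) < a + 1 := by linarith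
  have h1 := h (-(b / (a + 1)))
  have e : a * (-(b / (a + 1))) ^ 2 + 2 * b * (-(b / (a + 1)))
      = (b ^ 2 * (a - 2 * (a + 1))) / (a + 1) ^ 2 := by
    field_simp
    ring
  rw [e] at h1
  have hneg : (b ^ 2 * (a - 2 * (a + 1))) / (a + 1) ^ 2 < 0 :=
    div_neg_of_neg_of_pos (by nlinarith) (by positivity)
  linarith

/-- Discriminant-type lemma: if `a + 2 t b + t² c ≥ 0` for all `t`, `a, c ≥ 0`, then `b² ≤ a c`. -/
lemma quad_discrim {a b c : ℝ} (ha : 0 ≤ a) (hc : 0 ≤ c)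
    (h : ∀ t : ℝ, 0 ≤ a + 2 * b * t + c * t ^ 2) : b ^ 2 ≤ a * c := by
  rcases eq_or_lt_of_le hc with hc0 | hcpos
  · have hb : b = 0 := by
      by_contra hb
      have h1 := h (-((a + 1) / (2 * b)))
      have e : a + 2 * b * (-((a + 1) / (2 * b))) + c * (-((a + 1) / (2 * b))) ^ 2 = -1 := by
        rw [← hc0]
        field_simp
        ring
      rw [e] at h1
      linarith
    rw [hb, ← hc0]
    simp
  · have h1 := h (-b / c)
    have h2 : a + 2 * b * (-b / c) + c * (-b / c) ^ 2 = a - b ^ 2 / c := by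
      field_simp
      ring
    rw [h2, sub_nonneg, div_le_iff₀ hcpos] at h1
    linarith

lemma variational (A : H₁ →ₗ.[ℂ] H₂) {m : ℝ} (x₀ : A.domain) (hx₀ : ‖(x₀ : H₁)‖ = 1)
    (hm : ‖A x₀‖ = m) (hlow : ∀ z : A.domain, ‖(z : H₁)‖ = 1 → m ≤ ‖A z‖) (y : A.domain) :
    ⟪A x₀, A y⟫_ℂ = ((m ^ 2 : ℝ) : ℂ) * ⟪(x₀ : H₁), (y : H₁)⟫_ℂ := by
  have hm0 : 0 ≤ m := hm ▸ norm_nonneg _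
  have hsc : ∀ z : A.domain, m * ‖(z : H₁)‖ ≤ ‖A z‖ := by
    apply helper_scale (fun z => ‖A z‖) m ?_ hlow
    intro c z
    simp [A.map_smul, norm_smul]
  have key : ∀ y : A.domain,
      (⟪A x₀, A y⟫_ℂ).re = m ^ 2 * (⟪(x₀ : H₁), (y : H₁)⟫_ℂ).re := by
    intro y
    set a := ‖A y‖ ^ 2 - m ^ 2 * ‖(y : H₁)‖ ^ 2 with ha_def
    set b := (⟪A x₀, A y⟫_ℂ).re - m ^ 2 * (⟪(x₀ : H₁), (y : H₁)⟫_ℂ).re with hb_def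
    have ha : 0 ≤ a := by
      have := hsc y
      have h2 : (m * ‖(y : H₁)‖) ^ 2 ≤ ‖A y‖ ^ 2 := by
        apply pow_le_pow_left₀ (by positivity) this
      rw [mul_pow] at h2
      simp only [ha_def]
      linarith
    have hq : ∀ t : ℝ, 0 ≤ a * t ^ 2 + 2 * b * t := by
      intro t
      have h1 := hsc (x₀ + (t : ℂ) • y)
      have h2 : (m * ‖((x₀ + (t : ℂ) • y : A.domain) : H₁)‖) ^ 2
          ≤ ‖A (x₀ + (t : ℂ) • y)‖ ^ 2 := by
        apply pow_le_pow_left₀ (by positivity) h1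
      have e1 : ‖A (x₀ + (t : ℂ) • y)‖ ^ 2
          = m ^ 2 + 2 * (t * (⟪A x₀, A y⟫_ℂ).re) + t ^ 2 * ‖A y‖ ^ 2 := by
        rw [A.map_add, A.map_smul, @norm_add_sq ℂ, inner_smul_right]
        simp [norm_smul, hm, mul_pow, RCLike.re_to_complex, Complex.mul_re]
      have e2 : ‖((x₀ + (t : ℂ) • y : A.domain) : H₁)‖ ^ 2
          = 1 + 2 * (t * (⟪(x₀ : H₁), (y : H₁)⟫_ℂ).re) + t ^ 2 * ‖(y : H₁)‖ ^ 2 := by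
        push_cast
        rw [@norm_add_sq ℂ, inner_smul_right]
        simp [norm_smul, hx₀, mul_pow, RCLike.re_to_complex, Complex.mul_re]
      rw [e1] at h2
      rw [mul_pow, e2] at h2
      simp only [ha_def, hb_def]
      nlinarith [h2]
    have hb0 := quad_zero ha hq
    simp only [hb_def] at hb0
    linarith
  have key1 := key y
  have key2 := key (Complex.I • y)
  have e3 : A (Complex.I • y) = Complex.I • A y := A.map_smul _ _
  have e4 : ((Complex.I • y : A.domain) : H₁) = Complex.I • (y : H₁) := rfl
  rw [e3, e4, inner_smul_right, inner_smul_right] at key2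
  simp only [Complex.mul_re, Complex.I_re, Complex.I_im, zero_mul, one_mul, zero_sub,
    neg_mul, neg_sub, neg_zero] at key2
  apply Complex.ext
  · rw [key1]
    simp [← Complex.ofReal_pow, Complex.mul_re]
  · have him : (⟪(A x₀ : H₂), (A y : H₂)⟫_ℂ).im = m ^ 2 * (⟪(x₀ : H₁), (y : H₁)⟫_ℂ).im := by
      linarith [key2]
    rw [him]
    simp [← Complex.ofReal_pow, Complex.mul_im]

/-- The "scaled graph" `{(x, c' • T x)}` of `T` as a submodule of `WithLp 2 (H₁ × H₂)`. -/
noncomputable def grK (T : H₁ →ₗ.[ℂ] H₂) (c' : ℝ) : Submodule ℂ (WithLp 2 (H₁ × H₂)) :=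
  Submodule.comap ((LinearMap.prodMap LinearMap.id ((((c'⁻¹ : ℝ) : ℂ)) • LinearMap.id)).comp
    (WithLp.linearEquiv 2 ℂ (H₁ × H₂)).toLinearMap) T.graph

lemma mem_grK {T : H₁ →ₗ.[ℂ] H₂} {c' : ℝ} (hc' : c' ≠ 0) {v : WithLp 2 (H₁ × H₂)} :
    v ∈ grK T c' ↔ ∃ y : T.domain, v.fst = ↑y ∧ v.snd = ((c' : ℝ) : ℂ) • T y := by
  have hc'0 : ((c' : ℝ) : ℂ) ≠ 0 := by exact_mod_cast hc'
  constructor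
  · intro hv
    rw [grK, Submodule.mem_comap] at hv
    rw [LinearPMap.mem_graph_iff] at hv
    obtain ⟨y, h1, h2⟩ := hv
    refine ⟨y, h1.symm, ?_⟩
    have h2' : (((c'⁻¹ : ℝ)) : ℂ) • v.snd = T y := h2.symm
    have := congrArg (fun w => ((c' : ℝ) : ℂ) • w) h2'
    simp only [smul_smul] at this
    rw [← this]
    rw [← Complex.ofReal_mul, mul_inv_cancel₀ hc']
    simp
  · rintro ⟨y, h1, h2⟩
    rw [grK, Submodule.mem_comap, LinearPMap.mem_graph_iff]
    refine ⟨y, h1.symm, ?_⟩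
    show T y = (((c'⁻¹ : ℝ)) : ℂ) • v.snd
    symm
    rw [h2, smul_smul, ← Complex.ofReal_mul, inv_mul_cancel₀ hc']
    simp

lemma grK_closed {T : H₁ →ₗ.[ℂ] H₂} (hclosed : T.IsClosed) (c' : ℝ) :
    IsClosed ((grK T c' : Submodule ℂ (WithLp 2 (H₁ × H₂))) : Set (WithLp 2 (H₁ × H₂))) := by
  rw [grK, Submodule.comap_coe]
  apply hclosed.preimage
  show Continuous fun v : WithLp 2 (H₁ × H₂) =>
    ((v.fst, (((c'⁻¹ : ℝ)) : ℂ) • v.snd) : H₁ × H₂)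
  have hψ := (WithLp.prodContinuousLinearEquiv 2 ℂ H₁ H₂).continuous
  exact ((continuous_fst.comp hψ).prodMk ((continuous_snd.comp hψ).const_smul _))
lemma vonNeumann {T : H₁ →ₗ.[ℂ] H₂} (hdense : Dense (T.domain : Set H₁))
    (hclosed : T.IsClosed) (c : ℝ) (hc : 0 < c) (u : H₁) :
    ∃ x : (pmapComp T.adjoint T).domain,
      (c : ℂ) • ((pmapComp T.adjoint T) x : H₁) + (x : H₁) = u := by
  set c' := Real.sqrt c with hc'def
  have hc'pos : 0 < c' := Real.sqrt_pos.2 hc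
  have hc' : c' ≠ 0 := hc'pos.ne'
  have hc'sq : c' * c' = c := Real.mul_self_sqrt hc.le
  set K := grK T c' with hKdef
  haveI : CompleteSpace K := (grK_closed hclosed c').completeSpace_coe
  set E := WithLp.equiv 2 (H₁ × H₂) with hEdef
  obtain ⟨a, haK, b, hb, hab⟩ := K.exists_add_mem_mem_orthogonal (E.symm (u, 0))
  obtain ⟨y, hy1, hy2⟩ := (mem_grK hc').1 haK
  have hfst : u = a.fst + b.fst := by
    have h := congrArg (fun w : WithLp 2 (H₁ × H₂) => w.fst) hab
    simpa [hEdef] using h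
  have hsnd : (0 : H₂) = a.snd + b.snd := by
    have h := congrArg (fun w : WithLp 2 (H₁ × H₂) => w.snd) hab
    simpa [hEdef] using h
  have horth : ∀ z : T.domain,
      ⟪(z : H₁), b.fst⟫_ℂ + ((c' : ℝ) : ℂ) * ⟪(T z : H₂), b.snd⟫_ℂ = 0 := by
    intro z
    have hwK : (E.symm ((z : H₁), ((c' : ℝ) : ℂ) • T z)) ∈ K := by
      apply (mem_grK hc').2
      exact ⟨z, by simp [hEdef], by simp [hEdef]⟩
    have h0 := (Submodule.mem_orthogonal K b).1 hb _ hwK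
    rw [WithLp.prod_inner_apply] at h0
    simp only [hEdef, WithLp.equiv_symm_apply, WithLp.ofLp_toLp, WithLp.ofLp_fst, WithLp.ofLp_snd] at h0
    rwa [inner_smul_left, Complex.conj_ofReal] at h0
  have hmem : ((c' : ℝ) : ℂ) • b.snd ∈ T.adjoint.domain := by
    apply LinearPMap.mem_adjoint_domain_of_exists
    refine ⟨-b.fst, fun z => ?_⟩
    have h := congrArg (starRingEnd ℂ) (horth z)
    simp only [map_add, map_mul, inner_conj_symm, Complex.conj_ofReal, map_zero] at h
    rw [inner_neg_left, inner_smul_left, Complex.conj_ofReal]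
    linear_combination -h
  have hbsnd : ((c' : ℝ) : ℂ) • b.snd = (-(c : ℝ) : ℂ) • (T y : H₂) := by
    have hb2 : b.snd = -(((c' : ℝ) : ℂ) • T y) := by
      rw [hy2] at hsnd
      exact eq_neg_of_add_eq_zero_right hsnd.symm
    rw [hb2, smul_neg, smul_smul, ← Complex.ofReal_mul, hc'sq, neg_smul]
  have hcne : (-(c : ℝ) : ℂ) ≠ 0 := by
    simp only [ne_eq, Complex.ofReal_eq_zero, neg_eq_zero]
    exact hc.ne'
  have hTy : (T y : H₂) ∈ T.adjoint.domain := by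
    rw [hbsnd] at hmem
    have := T.adjoint.domain.smul_mem (-(c : ℝ) : ℂ)⁻¹ hmem
    rwa [inv_smul_smul₀ hcne] at this
  have hxmem : (y : H₁) ∈ (pmapComp T.adjoint T).domain :=
    mem_pmapComp.2 ⟨y.2, hTy⟩
  refine ⟨⟨(y : H₁), hxmem⟩, ?_⟩
  have happ : (pmapComp T.adjoint T) ⟨(y : H₁), hxmem⟩ = T.adjoint ⟨T y, hTy⟩ :=
    pmapComp_apply _ y.2 hTy
  have hval : T.adjoint ⟨((c' : ℝ) : ℂ) • b.snd, hmem⟩ = -b.fst := by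
    apply LinearPMap.adjoint_apply_eq hdense
    intro z
    have h := congrArg (starRingEnd ℂ) (horth z)
    simp only [map_add, map_mul, inner_conj_symm, Complex.conj_ofReal, map_zero] at h
    rw [inner_neg_left, inner_smul_left, Complex.conj_ofReal]
    linear_combination -h
  have hsub : (⟨((c' : ℝ) : ℂ) • b.snd, hmem⟩ : T.adjoint.domain)
      = (-(c : ℝ) : ℂ) • (⟨T y, hTy⟩ : T.adjoint.domain) := Subtype.ext (by
        show ((c' : ℝ) : ℂ) • b.snd = _
        rw [hbsnd]; rfl)
  rw [hsub, LinearPMap.map_smul] at hval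
  have hval2 : (c : ℂ) • (T.adjoint ⟨T y, hTy⟩ : H₁) = b.fst := by
    have := congrArg (fun w : H₁ => (-1 : ℂ) • w) hval
    simp only [smul_smul] at this
    push_cast at this ⊢
    rw [show ((-1 : ℂ)) * (-(c : ℝ) : ℂ) = (c : ℝ) by push_cast; ring] at this
    simpa using this
  rw [happ, hval2]
  simp [hfst, hy1, add_comm]
lemma S_inner {T : H₁ →ₗ.[ℂ] H₂} (hdense : Dense (T.domain : Set H₁))
    (x : (pmapComp T.adjoint T).domain) (h1 : (x : H₁) ∈ T.domain)
    (h2 : T ⟨(x : H₁), h1⟩ ∈ T.adjoint.domain) (y : T.domain) :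
    ⟪((pmapComp T.adjoint T) x : H₁), (y : H₁)⟫_ℂ
      = ⟪(T ⟨(x : H₁), h1⟩ : H₂), (T y : H₂)⟫_ℂ := by
  rw [pmapComp_apply x h1 h2]
  exact LinearPMap.adjoint_isFormalAdjoint hdense ⟨T ⟨(x : H₁), h1⟩, h2⟩ y

lemma fst_norm_le (z : WithLp 2 (H₁ × H₂)) : ‖z.fst‖ ≤ ‖z‖ := by
  have h := WithLp.prod_norm_sq_eq_of_L2 z
  nlinarith [norm_nonneg z.fst, norm_nonneg z, norm_nonneg z.snd]

lemma snd_norm_le (z : WithLp 2 (H₁ × H₂)) : ‖z.snd‖ ≤ ‖z‖ := by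
  have h := WithLp.prod_norm_sq_eq_of_L2 z
  nlinarith [norm_nonneg z.fst, norm_nonneg z, norm_nonneg z.snd]

lemma core_approx {T : H₁ →ₗ.[ℂ] H₂} (hdense : Dense (T.domain : Set H₁))
    (hclosed : T.IsClosed) (x : T.domain) {ε : ℝ} (hε : 0 < ε) :
    ∃ y : T.domain, (y : H₁) ∈ (pmapComp T.adjoint T).domain ∧
      ‖(y : H₁) - (x : H₁)‖ < ε ∧ ‖T y - T x‖ < ε := by
  classical
  set S := pmapComp T.adjoint T with hSdef
  let fstL : WithLp 2 (H₁ × H₂) →ₗ[ℂ] H₁ :=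
    (LinearMap.fst ℂ H₁ H₂).comp (WithLp.linearEquiv 2 ℂ (H₁ × H₂)).toLinearMap
  set W : Submodule ℂ (WithLp 2 (H₁ × H₂)) := grK T 1 ⊓ Submodule.comap fstL S.domain
    with hWdef
  set Wc := W.topologicalClosure with hWcdef
  haveI : CompleteSpace Wc := W.isClosed_topologicalClosure.completeSpace_coe
  set E := WithLp.equiv 2 (H₁ × H₂) with hEdef
  set v := E.symm ((x : H₁), T x) with hvdef
  have hvK : v ∈ grK T 1 := (mem_grK one_ne_zero).2 ⟨x, by simp [hvdef, hEdef], by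
    simp [hvdef, hEdef]⟩
  obtain ⟨a, haW, b, hbW, hab⟩ := Wc.exists_add_mem_mem_orthogonal v
  have hWc_le : Wc ≤ grK T 1 :=
    W.topologicalClosure_minimal inf_le_left (grK_closed hclosed 1)
  have hbK : b ∈ grK T 1 := by
    have hb' : b = v - a := by rw [hab]; abel
    exact hb' ▸ (grK T 1).sub_mem hvK (hWc_le haW)
  obtain ⟨zb, hzb1, hzb2⟩ := (mem_grK one_ne_zero).1 hbK
  have hzb2' : b.snd = T zb := by rw [hzb2]; simp
  have hbWo : b ∈ Wᗮ := Submodule.orthogonal_le W.le_topologicalClosure hbW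
  have horth : ∀ y : T.domain, (y : H₁) ∈ S.domain →
      ⟪(y : H₁), (zb : H₁)⟫_ℂ + ⟪(T y : H₂), (T zb : H₂)⟫_ℂ = 0 := by
    intro y hy
    have hwK : E.symm ((y : H₁), T y) ∈ W := by
      constructor
      · exact (mem_grK one_ne_zero).2 ⟨y, by simp [hEdef], by simp [hEdef]⟩
      · show fstL (E.symm ((y : H₁), T y)) ∈ S.domain
        simpa [fstL, hEdef] using hy
    have h0 := (Submodule.mem_orthogonal W b).1 hbWo _ hwK
    rw [WithLp.prod_inner_apply] at h0
    simpa [hEdef, hzb1, hzb2'] using h0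
  -- conclude zb = 0 using surjectivity of S + 1
  obtain ⟨w, hw⟩ := vonNeumann hdense hclosed 1 one_pos (zb : H₁)
  have hw1 : (w : H₁) ∈ T.domain := (mem_pmapComp.1 w.2).1
  have hw2 : T ⟨(w : H₁), hw1⟩ ∈ T.adjoint.domain := (mem_pmapComp.1 w.2).2
  have hzb0 : (zb : H₁) = 0 := by
    have h1 := horth ⟨(w : H₁), hw1⟩ w.2
    have h2 : ⟪(T ⟨(w : H₁), hw1⟩ : H₂), (T zb : H₂)⟫_ℂ
        = ⟪((S w : H₁)), (zb : H₁)⟫_ℂ := (S_inner hdense w hw1 hw2 zb).symm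
    rw [h2] at h1
    have h3 : ⟪((S w : H₁)) + (w : H₁), (zb : H₁)⟫_ℂ = 0 := by
      rw [inner_add_left]
      linear_combination h1
    have h4 : ((S w : H₁)) + (w : H₁) = (zb : H₁) := by
      have h5 := hw
      rw [show ((1 : ℝ) : ℂ) = 1 from by norm_num, one_smul] at h5
      exact h5
    rw [h4] at h3
    exact inner_self_eq_zero.1 h3
  have hb0 : b = 0 := by
    apply E.injective
    have e1 : (E b).1 = b.fst := rfl
    have e2 : (E b).2 = b.snd := rfl
    have hzbz : zb = 0 := Subtype.ext hzb0
    apply Prod.ext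
    · rw [e1, hzb1, hzb0]; simp [hEdef]
    · rw [e2, hzb2', hzbz]; simp [hEdef]
  have hvWc : v ∈ Wc := by rw [hab, hb0, add_zero]; exact haW
  have hvcl : (v : WithLp 2 (H₁ × H₂)) ∈ closure (W : Set (WithLp 2 (H₁ × H₂))) := by
    rw [← W.topologicalClosure_coe]
    exact hvWc
  rw [Metric.mem_closure_iff] at hvcl
  obtain ⟨w', hw'W, hdist⟩ := hvcl ε hε
  obtain ⟨hw'K, hw'S⟩ := hw'W
  obtain ⟨yw, hyw1, hyw2⟩ := (mem_grK one_ne_zero).1 hw'K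
  have hyw2' : w'.snd = T yw := by rw [hyw2]; simp
  have hywS : (yw : H₁) ∈ S.domain := by
    have : fstL w' ∈ S.domain := hw'S
    rwa [show fstL w' = w'.fst from rfl, hyw1] at this
  refine ⟨yw, hywS, ?_, ?_⟩
  · have h5 : ‖(v - w').fst‖ ≤ ‖v - w'‖ := fst_norm_le _
    have h6 : (v - w').fst = (x : H₁) - (yw : H₁) := by
      have : v.fst = (x : H₁) := by simp [hvdef, hEdef]
      rw [WithLp.sub_fst, this, hyw1]
    rw [dist_eq_norm] at hdist
    rw [h6] at h5
    rw [norm_sub_rev]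
    linarith
  · have h5 : ‖(v - w').snd‖ ≤ ‖v - w'‖ := snd_norm_le _
    have h6 : (v - w').snd = T x - T yw := by
      have : v.snd = T x := by simp [hvdef, hEdef]
      rw [WithLp.sub_snd, this, hyw2']
    rw [dist_eq_norm] at hdist
    rw [h6] at h5
    rw [norm_sub_rev]
    linarith
lemma forward_dir {T : H₁ →ₗ.[ℂ] H₂} (hdense : Dense (T.domain : Set H₁))
    (h : MinAttains T) : MinAttains (pmapComp T.adjoint T) := by
  obtain ⟨x₀, hx₀, hmin⟩ := h
  set S := pmapComp T.adjoint T with hSdef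
  set m := minMod T with hmdef
  have hm0 : 0 ≤ m := minMod_nonneg T
  have hvar := variational T x₀ hx₀ hmin (fun z hz => minMod_le z hz)
  have hinner : ∀ z : T.domain, ⟪((m ^ 2 : ℝ) : ℂ) • (x₀ : H₁), (z : H₁)⟫_ℂ
      = ⟪(T x₀ : H₂), (T z : H₂)⟫_ℂ := by
    intro z
    rw [inner_smul_left, Complex.conj_ofReal, hvar z]
  have hadj : (T x₀ : H₂) ∈ T.adjoint.domain :=
    LinearPMap.mem_adjoint_domain_of_exists _ ⟨((m ^ 2 : ℝ) : ℂ) • (x₀ : H₁), hinner⟩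
  have hx₀S : (x₀ : H₁) ∈ S.domain := mem_pmapComp.2 ⟨x₀.2, hadj⟩
  set x₀' : S.domain := ⟨(x₀ : H₁), hx₀S⟩ with hx₀'def
  have happ : S x₀' = T.adjoint ⟨T x₀, hadj⟩ := pmapComp_apply x₀' x₀.2 hadj
  have hval : T.adjoint ⟨T x₀, hadj⟩ = ((m ^ 2 : ℝ) : ℂ) • (x₀ : H₁) :=
    LinearPMap.adjoint_apply_eq hdense _ hinner
  have hnorm : ‖S x₀'‖ = m ^ 2 := by
    rw [happ, hval, norm_smul, hx₀, mul_one, Complex.norm_real, Real.norm_of_nonneg (sq_nonneg m)]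
  have hlowS : ∀ z : S.domain, ‖(z : H₁)‖ = 1 → m ^ 2 ≤ ‖S z‖ := by
    intro z hz
    obtain ⟨h1, h2⟩ := mem_pmapComp.1 z.2
    set z' : T.domain := ⟨(z : H₁), h1⟩ with hz'def
    have hq : ⟪(S z : H₁), (z : H₁)⟫_ℂ = ⟪(T z' : H₂), (T z' : H₂)⟫_ℂ :=
      S_inner hdense z h1 h2 z'
    have e1 : ‖T z'‖ ^ 2 ≤ ‖S z‖ := by
      have e2 : ‖⟪(S z : H₁), (z : H₁)⟫_ℂ‖ ≤ ‖(S z : H₁)‖ * ‖(z : H₁)‖ :=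
        norm_inner_le_norm _ _
      rw [hq, hz, mul_one, @inner_self_eq_norm_sq_to_K ℂ] at e2
      calc ‖T z'‖ ^ 2 = ‖((‖T z'‖ : ℂ)) ^ 2‖ := by
            rw [norm_pow, Complex.norm_real, norm_norm]
        _ ≤ ‖S z‖ := e2
    have e3 : m ≤ ‖T z'‖ := minMod_le z' hz
    nlinarith [norm_nonneg (T z'), hm0]
  refine ⟨x₀', hx₀, ?_⟩
  have hub : minMod S ≤ m ^ 2 := by
    have := minMod_le x₀' hx₀
    rwa [hnorm] at this
  have hlb : m ^ 2 ≤ minMod S := le_minMod x₀' hx₀ hlowS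
  rw [hnorm]
  linarith
section helpers
variable {E : Type*} [NormedAddCommGroup E] [InnerProductSpace ℂ E]

lemma inner_self_re (u : E) : (⟪u, u⟫_ℂ).re = ‖u‖ ^ 2 := by
  have h := @inner_self_eq_norm_sq ℂ _ _ _ _ u
  simpa using h

lemma re_inner_le (u v : E) : (⟪u, v⟫_ℂ).re ≤ ‖u‖ * ‖v‖ :=
  le_trans (Complex.re_le_norm _) (by exact norm_inner_le_norm u v)

lemma re_symm (u v : E) : (⟪u, v⟫_ℂ).re = (⟪v, u⟫_ℂ).re := by
  rw [← inner_conj_symm]; exact Complex.conj_re _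

end helpers

lemma sqrt_bound {T : H₁ →ₗ.[ℂ] H₂} (hdense : Dense (T.domain : Set H₁))
    (hclosed : T.IsClosed)
    (hne : ∃ y : (pmapComp T.adjoint T).domain, ‖(y : H₁)‖ = 1)
    (x : T.domain) (hx : ‖(x : H₁)‖ = 1) :
    Real.sqrt (minMod (pmapComp T.adjoint T)) ≤ ‖T x‖ := by
  set S := pmapComp T.adjoint T with hSdef
  obtain ⟨x₀, hx₀⟩ := hne
  set μ := minMod S with hμdef
  have hμ0 : 0 ≤ μ := minMod_nonneg S
  have form_id : ∀ u : S.domain, (⟪(S u : H₁), (u : H₁)⟫_ℂ).re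
      = ‖T ⟨(u : H₁), (mem_pmapComp.1 u.2).1⟩‖ ^ 2 := by
    intro u
    obtain ⟨h1, h2⟩ := mem_pmapComp.1 u.2
    rw [S_inner hdense u h1 h2 ⟨(u : H₁), h1⟩, inner_self_re]
  have form_nonneg : ∀ u : S.domain, 0 ≤ (⟪(S u : H₁), (u : H₁)⟫_ℂ).re := by
    intro u; rw [form_id u]; positivity
  have hsym_re : ∀ u v : S.domain,
      (⟪(S u : H₁), (v : H₁)⟫_ℂ).re = (⟪(S v : H₁), (u : H₁)⟫_ℂ).re := by
    intro u v
    obtain ⟨h1u, h2u⟩ := mem_pmapComp.1 u.2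
    obtain ⟨h1v, h2v⟩ := mem_pmapComp.1 v.2
    rw [S_inner hdense u h1u h2u ⟨(v : H₁), h1v⟩, S_inner hdense v h1v h2v ⟨(u : H₁), h1u⟩]
    exact re_symm _ _
  set Aset := {r : ℝ | ∃ y : S.domain, ‖(y : H₁)‖ = 1 ∧ r = (⟪(S y : H₁), (y : H₁)⟫_ℂ).re}
    with hAdef
  have hAne : Aset.Nonempty := ⟨_, x₀, hx₀, rfl⟩
  have hAbdd : BddBelow Aset := ⟨0, by rintro r ⟨y, hy, rfl⟩; exact form_nonneg y⟩
  set α := sInf Aset with hαdef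
  have hα0 : 0 ≤ α := le_csInf hAne (by rintro r ⟨y, hy, rfl⟩; exact form_nonneg y)
  have hαle : ∀ y : S.domain, ‖(y : H₁)‖ = 1 → α ≤ (⟪(S y : H₁), (y : H₁)⟫_ℂ).re :=
    fun y hy => csInf_le hAbdd ⟨y, hy, rfl⟩
  set K := Real.sqrt (μ ^ 2 + 2 * α + 1) with hKdef
  have hKsq : K ^ 2 = μ ^ 2 + 2 * α + 1 := Real.sq_sqrt (by positivity)
  have hK1 : 1 ≤ K := by
    rw [show (1 : ℝ) = Real.sqrt 1 from (Real.sqrt_one).symm, hKdef]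
    apply Real.sqrt_le_sqrt
    nlinarith
  have hKpos : 0 < K := lt_of_lt_of_le one_pos hK1
  have claim1 : ∀ y : S.domain, K * ‖(y : H₁)‖ ≤ ‖(S y : H₁) + (y : H₁)‖ := by
    apply helper_scale (fun y => ‖(S y : H₁) + (y : H₁)‖) K
    · intro c z
      have e0 : (S (c • z) : H₁) + ((c • z : S.domain) : H₁) = c • ((S z : H₁) + (z : H₁)) := by
        rw [S.map_smul, smul_add]; rfl
      rw [e0, norm_smul]
    · intro y hy
      have e1 : ‖(S y : H₁) + (y : H₁)‖ ^ 2
          = ‖(S y : H₁)‖ ^ 2 + 2 * (⟪(S y : H₁), (y : H₁)⟫_ℂ).re + 1 := by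
        rw [@norm_add_sq ℂ, hy]
        norm_num
      have e2 : μ ≤ ‖(S y : H₁)‖ := minMod_le y hy
      have e3 : α ≤ (⟪(S y : H₁), (y : H₁)⟫_ℂ).re := hαle y hy
      have e4 : K ^ 2 ≤ ‖(S y : H₁) + (y : H₁)‖ ^ 2 := by
        rw [hKsq, e1]; nlinarith
      nlinarith [norm_nonneg ((S y : H₁) + (y : H₁)), hKpos.le]
  have claim2 : ∀ y : S.domain, ‖(y : H₁)‖ = 1 →
      K - 1 ≤ (⟪(S y : H₁), (y : H₁)⟫_ℂ).re := by
    intro y hy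
    obtain ⟨w, hw⟩ := vonNeumann hdense hclosed 1 one_pos (y : H₁)
    have hw_eq : (S w : H₁) + (w : H₁) = (y : H₁) := by
      have h5 := hw
      rw [show ((1 : ℝ) : ℂ) = 1 from by norm_num, one_smul] at h5
      exact h5
    set a0 := (⟪(S w : H₁) + (w : H₁), (w : H₁)⟫_ℂ).re with ha0
    set b0 := (⟪(S w : H₁) + (w : H₁), (y : H₁)⟫_ℂ).re with hb0
    set c0 := (⟪(S y : H₁) + (y : H₁), (y : H₁)⟫_ℂ).re with hc0
    have hsymB : (⟪(S y : H₁) + (y : H₁), (w : H₁)⟫_ℂ).re = b0 := by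
      rw [hb0]
      rw [inner_add_left, inner_add_left, Complex.add_re, Complex.add_re]
      rw [hsym_re y w, re_symm ((y : H₁) : H₁) ((w : H₁) : H₁)]
    have hquad : ∀ t : ℝ, 0 ≤ a0 + 2 * b0 * t + c0 * t ^ 2 := by
      intro t
      set z : S.domain := w + (t : ℂ) • y with hzdef
      have hpos : 0 ≤ (⟪(S z : H₁) + (z : H₁), (z : H₁)⟫_ℂ).re := by
        rw [inner_add_left, Complex.add_re, inner_self_re]
        have := form_nonneg z
        positivity
      have hS : (S z : H₁) + (z : H₁)
          = ((S w : H₁) + (w : H₁)) + (t : ℂ) • ((S y : H₁) + (y : H₁)) := by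
        rw [hzdef, S.map_add, S.map_smul]
        push_cast
        rw [smul_add]
        abel
      have hcoe : ((z : S.domain) : H₁) = (w : H₁) + (t : ℂ) • (y : H₁) := rfl
      have hcx : ⟪(S z : H₁) + (z : H₁), (z : H₁)⟫_ℂ
          = (⟪(S w : H₁) + (w : H₁), (w : H₁)⟫_ℂ
              + (t : ℂ) * ⟪(S w : H₁) + (w : H₁), (y : H₁)⟫_ℂ)
            + ((t : ℂ) * ⟪(S y : H₁) + (y : H₁), (w : H₁)⟫_ℂ
              + (t : ℂ) * ((t : ℂ) * ⟪(S y : H₁) + (y : H₁), (y : H₁)⟫_ℂ)) := by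
        rw [hS, hcoe]
        simp only [inner_add_left, inner_add_right, inner_smul_left, inner_smul_right,
          Complex.conj_ofReal]
        ring
      have hre : (⟪(S z : H₁) + (z : H₁), (z : H₁)⟫_ℂ).re
          = a0 + 2 * b0 * t + c0 * t ^ 2 := by
        rw [hcx]
        simp only [Complex.add_re, Complex.mul_re, Complex.mul_im, Complex.ofReal_re,
          Complex.ofReal_im, zero_mul, sub_zero]
        rw [hsymB, ha0, hb0, hc0]
        ring
      rw [hre] at hpos
      exact hpos
    have hCS : b0 ^ 2 ≤ a0 * c0 := by
      apply quad_discrim ?_ ?_ hquad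
      · rw [ha0, inner_add_left, Complex.add_re, inner_self_re]
        have := form_nonneg w
        positivity
      · rw [hc0, inner_add_left, Complex.add_re, inner_self_re]
        have := form_nonneg y
        positivity
    have hb0_eq : b0 = 1 := by
      rw [hb0, hw_eq, inner_self_re, hy]
      norm_num
    have ha0_le : a0 ≤ 1 / K := by
      have h7 : K * ‖(w : H₁)‖ ≤ 1 := by
        have h7' := claim1 w
        rw [hw_eq, hy] at h7'
        exact h7'
      have h8 : a0 ≤ ‖(w : H₁)‖ := by
        rw [ha0, hw_eq]
        calc (⟪(y : H₁), (w : H₁)⟫_ℂ).re ≤ ‖(y : H₁)‖ * ‖(w : H₁)‖ := re_inner_le _ _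
          _ = ‖(w : H₁)‖ := by simp [hy]
      have h9 : ‖(w : H₁)‖ ≤ 1 / K := by
        rw [le_div_iff₀ hKpos, mul_comm]
        exact h7
      linarith
    have hc0_eq : c0 = (⟪(S y : H₁), (y : H₁)⟫_ℂ).re + 1 := by
      rw [hc0, inner_add_left, Complex.add_re, inner_self_re, hy]
      norm_num
    have hc0nn : 0 ≤ c0 := by
      rw [hc0_eq]
      have := form_nonneg y
      linarith
    have h10 : 1 ≤ (1 / K) * c0 := by
      calc (1 : ℝ) = b0 ^ 2 := by rw [hb0_eq]; ring
        _ ≤ a0 * c0 := hCS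
        _ ≤ (1 / K) * c0 := mul_le_mul_of_nonneg_right ha0_le hc0nn
    rw [hc0_eq] at h10
    have h11 : K ≤ (⟪(S y : H₁), (y : H₁)⟫_ℂ).re + 1 := by
      rw [div_mul_eq_mul_div, le_div_iff₀ hKpos, one_mul] at h10
      linarith
    linarith
  have hαK : K - 1 ≤ α := le_csInf hAne (by rintro r ⟨y, hy, rfl⟩; exact claim2 y hy)
  have hμα : μ ≤ α := by
    have h12 : K ≤ α + 1 := by linarith
    have h13 : K ^ 2 ≤ (α + 1) ^ 2 := by nlinarith
    rw [hKsq] at h13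
    nlinarith
  -- the scaled form bound
  have hform : ∀ y : S.domain, Real.sqrt μ * ‖(y : H₁)‖
      ≤ Real.sqrt ((⟪(S y : H₁), (y : H₁)⟫_ℂ).re) := by
    apply helper_scale (fun y => Real.sqrt ((⟪(S y : H₁), (y : H₁)⟫_ℂ).re)) (Real.sqrt μ)
    · intro c z
      have e0 : ⟪(S (c • z) : H₁), ((c • z : S.domain) : H₁)⟫_ℂ
          = (starRingEnd ℂ c) * (c * ⟪(S z : H₁), (z : H₁)⟫_ℂ) := by
        have e1 : (S (c • z) : H₁) = c • (S z : H₁) := by rw [S.map_smul]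
        have e2 : ((c • z : S.domain) : H₁) = c • (z : H₁) := rfl
        rw [e1, e2, inner_smul_left, inner_smul_right]
      rw [e0]
      have e3 : ((starRingEnd ℂ c) * (c * ⟪(S z : H₁), (z : H₁)⟫_ℂ)).re
          = ‖c‖ ^ 2 * (⟪(S z : H₁), (z : H₁)⟫_ℂ).re := by
        have e4 : (starRingEnd ℂ c) * (c * ⟪(S z : H₁), (z : H₁)⟫_ℂ)
            = ((‖c‖ ^ 2 : ℝ) : ℂ) * ⟪(S z : H₁), (z : H₁)⟫_ℂ := by
          rw [← mul_assoc, Complex.conj_mul']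
          push_cast
          ring
        rw [e4, Complex.re_ofReal_mul]
      rw [e3, Real.sqrt_mul (by positivity), Real.sqrt_sq (norm_nonneg c)]
    · intro y hy
      apply Real.sqrt_le_sqrt
      exact le_trans hμα (hαle y hy)
  -- transfer to D(T) by density of D(S) in the graph norm
  have hTrans : ∀ ε : ℝ, 0 < ε → ε ≤ 1 → Real.sqrt μ ≤ ‖T x‖ + ε * (Real.sqrt μ + 1) := by
    intro ε hε hε1
    obtain ⟨y, hymem, hy1, hy2⟩ := core_approx hdense hclosed x hε
    set y' : S.domain := ⟨(y : H₁), hymem⟩ with hy'def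
    have hTy : Real.sqrt μ * ‖(y : H₁)‖ ≤ ‖T y‖ := by
      have h14 := hform y'
      have h15 : (⟪(S y' : H₁), (y' : H₁)⟫_ℂ).re = ‖T y‖ ^ 2 := by
        rw [form_id y']
      rw [h15, Real.sqrt_sq (norm_nonneg _)] at h14
      exact h14
    have h16 : 1 - ε ≤ ‖(y : H₁)‖ := by
      have habs := abs_le.1 (abs_norm_sub_norm_le ((y : H₁)) ((x : H₁)))
      have h1' := habs.1
      linarith [hy1, hx.ge, hx.le]
    have h17 : ‖T y‖ ≤ ‖T x‖ + ε := by
      have habs := abs_le.1 (abs_norm_sub_norm_le (T y) (T x))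
      linarith [hy2, habs.2]
    have h18 : Real.sqrt μ * (1 - ε) ≤ Real.sqrt μ * ‖(y : H₁)‖ :=
      mul_le_mul_of_nonneg_left h16 (Real.sqrt_nonneg μ)
    nlinarith [Real.sqrt_nonneg μ]
  by_contra hcon
  push_neg at hcon
  set δ := Real.sqrt μ - ‖T x‖ with hδdef
  have hδpos : 0 < δ := by rw [hδdef]; linarith
  have hs1 : 0 < Real.sqrt μ + 1 := by positivity
  set ε := min 1 (δ / (2 * (Real.sqrt μ + 1))) with hεdef
  have hεpos : 0 < ε := lt_min one_pos (by positivity)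
  have hεle : ε ≤ 1 := min_le_left _ _
  have h19 := hTrans ε hεpos hεle
  have h20 : ε * (Real.sqrt μ + 1) ≤ δ / 2 := by
    have : ε ≤ δ / (2 * (Real.sqrt μ + 1)) := min_le_right _ _
    calc ε * (Real.sqrt μ + 1) ≤ (δ / (2 * (Real.sqrt μ + 1))) * (Real.sqrt μ + 1) :=
          mul_le_mul_of_nonneg_right this hs1.le
      _ = δ / 2 := by field_simp
  rw [hδdef] at h20
  linarith
lemma backward_dir {T : H₁ →ₗ.[ℂ] H₂} (hdense : Dense (T.domain : Set H₁))
    (hclosed : T.IsClosed) (h : MinAttains (pmapComp T.adjoint T)) : MinAttains T := by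
  set S := pmapComp T.adjoint T with hSdef
  set μ := minMod S with hμdef
  obtain ⟨x₀, hx₀, hmin⟩ := h
  have hμ0 : 0 ≤ μ := minMod_nonneg S
  obtain ⟨h1, h2⟩ := mem_pmapComp.1 x₀.2
  set x₀' : T.domain := ⟨(x₀ : H₁), h1⟩ with hx₀'def
  have hq0 : ‖T x₀'‖ ^ 2 = (⟪(S x₀ : H₁), (x₀ : H₁)⟫_ℂ).re := by
    rw [S_inner hdense x₀ h1 h2 x₀', inner_self_re]
  rcases eq_or_lt_of_le hμ0 with hμz | hμpos
  · have hS0 : ‖(S x₀ : H₁)‖ = 0 := by rw [hmin, ← hμdef, ← hμz]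
    have hre0 : (⟪(S x₀ : H₁), (x₀ : H₁)⟫_ℂ).re = 0 := by
      have hb : ‖⟪(S x₀ : H₁), (x₀ : H₁)⟫_ℂ‖ ≤ 0 := by
        have hb' := norm_inner_le_norm (𝕜 := ℂ) (S x₀ : H₁) (x₀ : H₁)
        rw [hS0, zero_mul] at hb'
        exact hb'
      have hab : |(⟪(S x₀ : H₁), (x₀ : H₁)⟫_ℂ).re| ≤ 0 := by
        calc |(⟪(S x₀ : H₁), (x₀ : H₁)⟫_ℂ).re| ≤ ‖(⟪(S x₀ : H₁), (x₀ : H₁)⟫_ℂ)‖ :=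
              Complex.abs_re_le_norm _
          _ = ‖⟪(S x₀ : H₁), (x₀ : H₁)⟫_ℂ‖ := rfl
          _ ≤ 0 := hb
      have := abs_nonneg ((⟪(S x₀ : H₁), (x₀ : H₁)⟫_ℂ).re)
      rw [← abs_eq_zero]
      linarith
    have hT0 : ‖T x₀'‖ = 0 := by
      have := hq0.trans hre0
      exact pow_eq_zero_iff (n := 2) (by norm_num) |>.1 this
    refine ⟨x₀', hx₀, ?_⟩
    have hle := minMod_le x₀' hx₀
    have hge := minMod_nonneg T
    rw [hT0] at *
    linarith
  · have hvarS := variational S x₀ hx₀ hmin (fun z hz => minMod_le z hz)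
    have hsym : ∀ y : S.domain, ⟪(x₀ : H₁), (S y : H₁)⟫_ℂ = ⟪(S x₀ : H₁), (y : H₁)⟫_ℂ := by
      intro y
      obtain ⟨h1y, h2y⟩ := mem_pmapComp.1 y.2
      have e1 := S_inner hdense y h1y h2y x₀'
      have e2 := S_inner hdense x₀ h1 h2 ⟨(y : H₁), h1y⟩
      calc ⟪(x₀ : H₁), (S y : H₁)⟫_ℂ
          = starRingEnd ℂ ⟪(S y : H₁), (x₀ : H₁)⟫_ℂ := (inner_conj_symm _ _).symm
        _ = starRingEnd ℂ ⟪(T ⟨(y : H₁), h1y⟩ : H₂), (T x₀' : H₂)⟫_ℂ := by rw [e1]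
        _ = ⟪(T x₀' : H₂), (T ⟨(y : H₁), h1y⟩ : H₂)⟫_ℂ := inner_conj_symm _ _
        _ = ⟪(S x₀ : H₁), (y : H₁)⟫_ℂ := e2.symm
    set zv := (S x₀ : H₁) - ((μ : ℝ) : ℂ) • (x₀ : H₁) with hzv
    have hzero : ∀ u : H₁, ⟪zv, u⟫_ℂ = 0 := by
      intro u
      obtain ⟨y, hy⟩ := vonNeumann hdense hclosed μ⁻¹ (inv_pos.2 hμpos) u
      rw [← hy]
      have hv := hvarS y
      have hs := hsym y
      rw [inner_add_right, inner_smul_right, hzv, inner_sub_left, inner_sub_left,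
        inner_smul_left, inner_smul_left, Complex.conj_ofReal, hv, hs]
      have hμne : ((μ : ℝ) : ℂ) ≠ 0 := by exact_mod_cast hμpos.ne'
      push_cast
      field_simp
      ring
    have hz0 : zv = 0 := inner_self_eq_zero.1 (hzero zv)
    have hSx0 : (S x₀ : H₁) = ((μ : ℝ) : ℂ) • (x₀ : H₁) := sub_eq_zero.1 hz0
    have hTx2 : ‖T x₀'‖ ^ 2 = μ := by
      rw [hq0, hSx0, inner_smul_left, Complex.conj_ofReal, Complex.re_ofReal_mul,
        inner_self_re, hx₀]
      norm_num
    have hTx : ‖T x₀'‖ = Real.sqrt μ := by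
      rw [← hTx2, Real.sqrt_sq (norm_nonneg _)]
    refine ⟨x₀', hx₀, ?_⟩
    have hle := minMod_le x₀' hx₀
    have hge : Real.sqrt μ ≤ minMod T :=
      le_minMod x₀' hx₀ (fun y hy => sqrt_bound hdense hclosed ⟨x₀, hx₀⟩ y hy)
    rw [hTx] at hle ⊢
    linarith

/-- A densely defined closed operator `T` is minimum attaining iff `T*T` (with its natural
domain `{x ∈ D(T) : Tx ∈ D(T*)}`) is minimum attaining. -/
theorem minAttains_iff_adjoint_comp_minAttains (T : H₁ →ₗ.[ℂ] H₂)
    (hdense : Dense (T.domain : Set H₁)) (hclosed : T.IsClosed) :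
    MinAttains T ↔ MinAttains (pmapComp T.adjoint T) :=
  ⟨fun h => forward_dir hdense h, fun h => backward_dir hdense hclosed h⟩
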